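/- With the appended-row setup below, define the Wolfe gap G = sup over z ∈ ℝᵈ with ‖z‖₁ ≤ λ of ⟨Xw − Xz, g⟩, and G' = sup over z ∈ ℝᵈ with ‖z‖₁ ≤ λ of ⟨X'w − X'z, g'⟩. Then |G' − G| ≤ 4λ²/n. -/
import Mathlib

lemma dot_abs_le {d : ℕ} (x z : Fin d → ℝ) (hx : ∀ k, |x k| ≤ 1) :
    |∑ k, x k * z k| ≤ ∑ k, |z k| := by
  calc |∑ k, x k * z k| ≤ ∑ k, |x k * z k| := Finset.abs_sum_le_sum_abs _ _
    _ ≤ ∑ k, |z k| := by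
        apply Finset.sum_le_sum
        intro k _
        rw [abs_mul]
        calc |x k| * |z k| ≤ 1 * |z k| :=
              mul_le_mul_of_nonneg_right (hx k) (abs_nonneg _)
          _ = |z k| := one_mul _

/-- Appending one bounded datapoint changes the Wolfe gap of ℓ₁-constrained
least-squares regression by at most `4λ²/n`. -/
theorem sensitivity_wolfe_gap (n d : ℕ) (hn : 0 < n) (lam : ℝ) (hlam : 0 < lam)
    (X : Fin n → Fin d → ℝ) (y : Fin n → ℝ)
    (hX : ∀ j k, |X j k| ≤ 1) (hy : ∀ j, |y j| ≤ lam)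
    (x₀ : Fin d → ℝ) (hx₀ : ∀ k, |x₀ k| ≤ 1) (y₀ : ℝ) (hy₀ : |y₀| ≤ lam)
    (X' : Fin (n + 1) → Fin d → ℝ) (hX' : X' = Fin.snoc X x₀)
    (y' : Fin (n + 1) → ℝ) (hy' : y' = Fin.snoc y y₀)
    (w : Fin d → ℝ) (hw : ∑ k, |w k| ≤ lam)
    (g : Fin n → ℝ) (hg : g = fun j => (1 / (n : ℝ)) * ((∑ k, X j k * w k) - y j))
    (g' : Fin (n + 1) → ℝ)
    (hg' : g' = fun j => (1 / (n : ℝ)) * ((∑ k, X' j k * w k) - y' j))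
    (G G' : ℝ)
    (hG : G = sSup ((fun z : Fin d → ℝ =>
      ∑ j, ((∑ k, X j k * w k) - ∑ k, X j k * z k) * g j) ''
        {z : Fin d → ℝ | ∑ k, |z k| ≤ lam}))
    (hG' : G' = sSup ((fun z : Fin d → ℝ =>
      ∑ j, ((∑ k, X' j k * w k) - ∑ k, X' j k * z k) * g' j) ''
        {z : Fin d → ℝ | ∑ k, |z k| ≤ lam})) :
    |G' - G| ≤ 4 * lam ^ 2 / n := by
  have hnR : (0:ℝ) < n := by exact_mod_cast hn
  set S : Set (Fin d → ℝ) := {z : Fin d → ℝ | ∑ k, |z k| ≤ lam} with hS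
  set F : (Fin d → ℝ) → ℝ := fun z =>
    ∑ j, ((∑ k, X j k * w k) - ∑ k, X j k * z k) * g j with hF
  set F' : (Fin d → ℝ) → ℝ := fun z =>
    ∑ j, ((∑ k, X' j k * w k) - ∑ k, X' j k * z k) * g' j with hF'
  have h0S : (0 : Fin d → ℝ) ∈ S := by
    simp only [hS, Set.mem_setOf_eq, Pi.zero_apply, abs_zero, Finset.sum_const_zero]
    exact hlam.le
  have hne : (F '' S).Nonempty := ⟨F 0, Set.mem_image_of_mem _ h0S⟩
  have hne' : (F' '' S).Nonempty := ⟨F' 0, Set.mem_image_of_mem _ h0S⟩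
  set c : ℝ := 4 * lam ^ 2 / n with hc
  have hc0 : 0 ≤ c := by positivity
  -- basic bounds
  have hgj : ∀ j, |g j| ≤ 2 * lam / n := by
    intro j
    have h1 : |∑ k, X j k * w k| ≤ lam :=
      le_trans (dot_abs_le (X j) w (hX j)) hw
    have : |g j| = |(∑ k, X j k * w k) - y j| / n := by
      rw [hg]; rw [abs_mul, abs_of_pos (by positivity : (0:ℝ) < 1 / n)]
      ring
    rw [this]
    have hnum : |(∑ k, X j k * w k) - y j| ≤ 2 * lam := by
      calc |(∑ k, X j k * w k) - y j| ≤ |∑ k, X j k * w k| + |y j| := abs_sub _ _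
        _ ≤ lam + lam := add_le_add h1 (hy j)
        _ = 2 * lam := by ring
    exact div_le_div_of_nonneg_right hnum hnR.le |>.trans_eq rfl
  -- split F' into F plus the extra term
  have hsplit : ∀ z : Fin d → ℝ, F' z = F z +
      ((∑ k, x₀ k * w k) - ∑ k, x₀ k * z k) * ((1 / (n:ℝ)) * ((∑ k, x₀ k * w k) - y₀)) := by
    intro z
    simp only [hF', hF]
    rw [Fin.sum_univ_castSucc]
    congr 1
    · apply Finset.sum_congr rfl
      intro j _
      simp [hX', hg', hg, Fin.snoc_castSucc, hy']
    · simp [hX', hg', hy', Fin.snoc_last]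
  have hdiff : ∀ z ∈ S, |F' z - F z| ≤ c := by
    intro z hz
    rw [hsplit z, add_sub_cancel_left]
    have hza : |∑ k, x₀ k * z k| ≤ lam :=
      le_trans (dot_abs_le x₀ z hx₀) hz
    have hwa : |∑ k, x₀ k * w k| ≤ lam :=
      le_trans (dot_abs_le x₀ w hx₀) hw
    have ha : |(∑ k, x₀ k * w k) - ∑ k, x₀ k * z k| ≤ 2 * lam := by
      calc _ ≤ |∑ k, x₀ k * w k| + |∑ k, x₀ k * z k| := abs_sub _ _
        _ ≤ lam + lam := add_le_add hwa hza
        _ = 2 * lam := by ring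
    have hb : |(1 / (n:ℝ)) * ((∑ k, x₀ k * w k) - y₀)| ≤ 2 * lam / n := by
      rw [abs_mul, abs_of_pos (by positivity : (0:ℝ) < 1 / n)]
      have : |(∑ k, x₀ k * w k) - y₀| ≤ 2 * lam := by
        calc _ ≤ |∑ k, x₀ k * w k| + |y₀| := abs_sub _ _
          _ ≤ lam + lam := add_le_add hwa hy₀
          _ = 2 * lam := by ring
      calc 1 / (n:ℝ) * |(∑ k, x₀ k * w k) - y₀| ≤ 1 / n * (2 * lam) := by
            exact mul_le_mul_of_nonneg_left this (by positivity)
        _ = 2 * lam / n := by ring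
    calc |_ * _| = |(∑ k, x₀ k * w k) - ∑ k, x₀ k * z k| *
          |(1 / (n:ℝ)) * ((∑ k, x₀ k * w k) - y₀)| := abs_mul _ _
      _ ≤ (2 * lam) * (2 * lam / n) := by
          exact mul_le_mul ha hb (abs_nonneg _) (by positivity)
      _ = c := by rw [hc]; ring
  -- F bounded above on S
  have hFb : ∀ z ∈ S, |F z| ≤ 4 * lam ^ 2 := by
    intro z hz
    have : |F z| ≤ ∑ j : Fin n, (2 * lam) * (2 * lam / n) := by
      refine le_trans (Finset.abs_sum_le_sum_abs _ _) (Finset.sum_le_sum ?_)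
      intro j _
      rw [abs_mul]
      have ha : |(∑ k, X j k * w k) - ∑ k, X j k * z k| ≤ 2 * lam := by
        calc _ ≤ |∑ k, X j k * w k| + |∑ k, X j k * z k| := abs_sub _ _
          _ ≤ lam + lam := add_le_add
              (le_trans (dot_abs_le (X j) w (hX j)) hw)
              (le_trans (dot_abs_le (X j) z (hX j)) hz)
          _ = 2 * lam := by ring
      exact mul_le_mul ha (hgj j) (abs_nonneg _) (by positivity)
    refine this.trans ?_
    rw [Finset.sum_const, Finset.card_univ, Fintype.card_fin, nsmul_eq_mul]
    rw [mul_comm]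
    field_simp
    ring_nf
    rfl
  have hbdd : BddAbove (F '' S) := by
    refine ⟨4 * lam ^ 2, ?_⟩
    rintro _ ⟨z, hz, rfl⟩
    exact (abs_le.mp (hFb z hz)).2
  have hbdd' : BddAbove (F' '' S) := by
    refine ⟨4 * lam ^ 2 + c, ?_⟩
    rintro _ ⟨z, hz, rfl⟩
    have h1 := (abs_le.mp (hdiff z hz)).2
    have h2 := (abs_le.mp (hFb z hz)).2
    linarith
  rw [hG, hG']
  rw [abs_sub_le_iff]
  constructor
  · rw [sub_le_iff_le_add]
    refine csSup_le hne' ?_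
    rintro _ ⟨z, hz, rfl⟩
    have h1 := (abs_le.mp (hdiff z hz)).2
    have h2 : F z ≤ sSup (F '' S) := le_csSup hbdd (Set.mem_image_of_mem _ hz)
    linarith
  · rw [sub_le_iff_le_add]
    refine csSup_le hne ?_
    rintro _ ⟨z, hz, rfl⟩
    have h1 := (abs_le.mp (hdiff z hz)).1
    have h2 : F' z ≤ sSup (F' '' S) := le_csSup hbdd' (Set.mem_image_of_mem _ hz)
    linarith
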